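/- Let D be an edge set with u,v connected in G−D, and let P = π_{G−D}(u,v). Let c be a vertex such that π(u,c) contains an edge of D, and let p be a vertex on π(u,c) with p ≠ c such that no vertex of V(D) lies strictly between p and c on π(u,c). If the maximal prefix of P all of whose edges lie in T_induced is nonempty with last edge e_Δ, then e_Δ is not an edge of the subpath of π(u,c) from p to c. -/

import Mathlib

open SimpleGraph

variable {V : Type*}

/-- Total weight of a walk with respect to edge weights `w`. -/
def walkWeight (w : Sym2 V → ℝ) {G : SimpleGraph V} {a b : V} (p : G.Walk a b) : ℝ :=
  (p.edges.map w).sum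

/-- `p` is the/a minimum-weight path from `a` to `b` in `G`. -/
def IsShortestPath (w : Sym2 V → ℝ) (G : SimpleGraph V) {a b : V} (p : G.Walk a b) : Prop :=
  p.IsPath ∧ ∀ q : G.Walk a b, q.IsPath → walkWeight w p ≤ walkWeight w q

/-- `Decomposable w G k p` : `p` is the concatenation of at most `k+1` shortest paths
of `G` interleaved with at most `k` single edges. -/
inductive Decomposable (w : Sym2 V → ℝ) (G : SimpleGraph V) :
    ℕ → ∀ {a b : V}, G.Walk a b → Prop
  | single {a b : V} (k : ℕ) (p : G.Walk a b) (hp : IsShortestPath w G p) :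
      Decomposable w G k p
  | cons {a b c d : V} (k : ℕ) (p : G.Walk a b) (h : G.Adj b c) (q : G.Walk c d)
      (hp : IsShortestPath w G p) (hq : Decomposable w G k q) :
      Decomposable w G (k + 1) (p.append (Walk.cons h q))

/-- The rank of a walk `p` in `G`: the least `k` such that `p` is `k`-decomposable. -/
noncomputable def pathRank (w : Sym2 V → ℝ) (G : SimpleGraph V) {a b : V} (p : G.Walk a b) : ℕ :=
  sInf {k | Decomposable w G k p}

set_option linter.unusedSectionVars false

section Aux
variable [DecidableEq V] {G : SimpleGraph V} {w : Sym2 V → ℝ}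

lemma walkWeight_append {a b c : V} (A : G.Walk a b) (B : G.Walk b c) :
    walkWeight w (A.append B) = walkWeight w A + walkWeight w B := by
  simp [walkWeight, Walk.edges_append]

lemma weight_le_of_walk (hw : ∀ e ∈ G.edgeSet, 0 < w e) {a b : V} {p : G.Walk a b}
    (hsp : IsShortestPath w G p) (q : G.Walk a b) : walkWeight w p ≤ walkWeight w q := by
  refine (hsp.2 q.bypass q.bypass_isPath).trans ?_
  obtain ⟨l, hl1, hl2⟩ := q.bypass_isPath.isTrail.edges_nodup.subperm q.edges_bypass_subset
  have h1 : walkWeight w q.bypass = (l.map w).sum := ((hl1.map w).sum_eq).symm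
  rw [h1, walkWeight]
  exact List.Sublist.sum_le_sum (hl2.map w)
    (by
      intro x hx
      obtain ⟨e, he, rfl⟩ := List.mem_map.mp hx
      exact (hw e (q.edges_subset_edgeSet he)).le)

lemma shortest_prefix (hw : ∀ e ∈ G.edgeSet, 0 < w e) {a m b : V} {A : G.Walk a m}
    {B : G.Walk m b} (h : IsShortestPath w G (A.append B)) : IsShortestPath w G A := by
  refine ⟨h.1.of_append_left, fun q hq => ?_⟩
  have h2 := weight_le_of_walk hw h (q.append B)
  rw [walkWeight_append, walkWeight_append] at h2
  linarith

lemma nil_shortest {a : V} : IsShortestPath w G (Walk.nil : G.Walk a a) := by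
  refine ⟨by simp, fun q hq => ?_⟩
  rw [Walk.isPath_iff_eq_nil.mp hq]

lemma path_first_edge {y b z : V} {p : G.Walk y b} (hp : p.IsPath) (he : s(y, z) ∈ p.edges) :
    ∃ (h : G.Adj y z) (q : G.Walk z b), p = Walk.cons h q := by
  cases p with
  | nil => simp at he
  | cons h' q =>
    rw [Walk.edges_cons, List.mem_cons] at he
    rcases he with he | he
    · obtain rfl : z = _ := Sym2.congr_right.mp he
      exact ⟨h', q, rfl⟩
    · exact absurd (q.fst_mem_support_of_mem_edges he)
        ((Walk.cons_isPath_iff h' q).mp hp).2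

lemma key (hw : ∀ e ∈ G.edgeSet, 0 < w e) (πG : ∀ a b : V, G.Walk a b)
    (hπG : ∀ a b : V, IsShortestPath w G (πG a b))
    (huniqG : ∀ (a b : V) (p q : G.Walk a b),
      IsShortestPath w G p → IsShortestPath w G q → p = q)
    {u z : V} (Q : G.Walk u z) (hQP : Q.IsPath)
    (hQe : ∀ e ∈ Q.edges, ∃ a, e ∈ (πG u a).edges) : IsShortestPath w G Q := by
  induction Q using SimpleGraph.Walk.concatRec with
  | Hnil => exact nil_shortest
  | Hconcat p h ih =>
    rename_i u' y z'
    have hQP' := hQP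
    rw [Walk.concat_eq_append] at hQP'
    have hpP : p.IsPath := hQP'.of_append_left
    have hpe : ∀ e ∈ p.edges, ∃ a, e ∈ (πG u' a).edges := fun e hep =>
      hQe e (by
        rw [Walk.edges_concat, List.concat_eq_append]
        exact List.mem_append_left _ hep)
    have hps := ih hpP hpe
    obtain ⟨a, ha⟩ := hQe s(y, z') (by rw [Walk.edges_concat]; simp)
    have hy : y ∈ (πG u' a).support := (πG u' a).fst_mem_support_of_mem_edges ha
    have hsplit := (πG u' a).take_spec hy
    have htshort : IsShortestPath w G ((πG u' a).takeUntil y hy) := by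
      refine shortest_prefix hw (B := (πG u' a).dropUntil y hy) ?_
      rw [hsplit]; exact hπG u' a
    have htU : (πG u' a).takeUntil y hy = p := huniqG _ _ _ _ htshort hps
    have hznotp : z' ∉ p.support := by
      have := hQP.support_nodup
      rw [Walk.support_concat, List.nodup_append] at this
      intro hmem
      exact this.2.2 z' hmem z' (List.mem_singleton_self z') rfl
    have hed : s(y, z') ∈ ((πG u' a).dropUntil y hy).edges := by
      rw [← hsplit, Walk.edges_append, List.mem_append] at ha
      rcases ha with h1 | h1
      · rw [htU] at h1
        exact absurd (p.snd_mem_support_of_mem_edges h1) hznotp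
      · exact h1
    obtain ⟨hadj, rest, hrest⟩ := path_first_edge ((hπG u' a).1.dropUntil hy) hed
    have hfinal : πG u' a = (p.concat h).append rest := by
      rw [← hsplit, hrest, htU, Walk.concat_append]
    refine shortest_prefix hw (B := rest) ?_
    rw [← hfinal]; exact hπG u' a

lemma walk_take {G' : SimpleGraph V} {u v : V} :
    ∀ (P : G'.Walk u v) (n : ℕ), n ≤ P.length →
      ∃ (t : V) (Q : G'.Walk u t) (R : G'.Walk t v), Q.append R = P ∧ Q.length = n
  | P, 0, _ => ⟨u, .nil, P, rfl, rfl⟩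
  | .nil, n + 1, h => by simp at h
  | .cons h' P', n + 1, h => by
    obtain ⟨t, Q, R, h1, h2⟩ := walk_take P' n (by simpa using h)
    exact ⟨t, .cons h' Q, R, by rw [Walk.cons_append, h1], by simp [h2]⟩

end Aux

/-- Claim 4.3.  Let `P = π_{G−D}(u,v)`.  Let `c` be a vertex such that
`π(u,c)` contains an edge of `D`, and let `p ≠ c` be a vertex on `π(u,c)` such that no
vertex of `V(D)` lies strictly between `p` and `c` on `π(u,c)`.  If the maximal prefix of
`P` all of whose edges lie in `T_induced` is nonempty with last edge `e_Δ`, then `e_Δ` is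
not an edge of the subpath of `π(u,c)` from `p` to `c`. -/
theorem stmt12 [Fintype V] [DecidableEq V] (G : SimpleGraph V) (w : Sym2 V → ℝ)
    (hw : ∀ e ∈ G.edgeSet, 0 < w e)
    (πG : ∀ a b : V, G.Walk a b) (hπG : ∀ a b : V, IsShortestPath w G (πG a b))
    (huniqG : ∀ (a b : V) (p q : G.Walk a b),
      IsShortestPath w G p → IsShortestPath w G q → p = q)
    (D : Set (Sym2 V)) (hDsub : D ⊆ G.edgeSet)
    (huniqD : ∀ (a b : V) (p q : (G.deleteEdges D).Walk a b),
      IsShortestPath w (G.deleteEdges D) p → IsShortestPath w (G.deleteEdges D) q → p = q)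
    (u v : V)
    (P : (G.deleteEdges D).Walk u v) (hP : IsShortestPath w (G.deleteEdges D) P)
    (c : V)
    -- π(u,c) contains an edge of D
    (hc : ∃ e ∈ (πG u c).edges, e ∈ D)
    (p : V) (hpc : p ≠ c)
    -- p lies on π(u,c)
    (hp : p ∈ (πG u c).support)
    -- no vertex of V(D) lies strictly between p and c on π(u,c)
    (hbetween : ∀ z ∈ ((πG u c).dropUntil p hp).support, z ≠ p → z ≠ c →
      ¬∃ f ∈ D, z ∈ f) :
    let Tind : Sym2 V → Prop := fun e =>
      ∃ a : V, ((∃ f ∈ D, a ∈ f) ∨ a = u) ∧ ∃ b : V, ((∃ f ∈ D, b ∈ f) ∨ b = u) ∧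
        Xor' (e ∈ (πG u a).edges) (e ∈ (πG u b).edges)
    let pre : List (Sym2 V) :=
      P.edges.takeWhile fun e => @decide (Tind e) (Classical.propDecidable _)
    ∀ hne : pre ≠ [], pre.getLast hne ∉ ((πG u c).dropUntil p hp).edges := by
  intro Tind pre hne hmem
  have hpre_prefix : pre <+: P.edges := List.takeWhile_prefix _
  have hpreTind : ∀ e ∈ pre, Tind e := by
    intro e he
    have h := List.mem_takeWhile_imp (l := P.edges)
      (p := fun e => @decide (Tind e) (Classical.propDecidable _)) he
    exact @of_decide_eq_true _ (Classical.propDecidable _) h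
  have hpreD : ∀ e ∈ pre, e ∉ D := by
    intro e he
    have h1 : e ∈ P.edges := hpre_prefix.subset he
    have h2 := P.edges_subset_edgeSet h1
    rw [SimpleGraph.edgeSet_deleteEdges] at h2
    exact h2.2
  have hnle : pre.length ≤ P.length := by
    rw [← Walk.length_edges]; exact hpre_prefix.length_le
  obtain ⟨t, Q, R, hQR, hQlen⟩ := walk_take P pre.length hnle
  have hedges : Q.edges ++ R.edges = P.edges := by rw [← Walk.edges_append, hQR]
  have hQed : Q.edges = pre := by
    have h1 : pre = P.edges.take pre.length := List.prefix_iff_eq_take.mp hpre_prefix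
    have h2 : Q.edges.length = pre.length := by rw [Walk.length_edges, hQlen]
    rw [h1, ← hedges, List.take_left' h2]
  have hQpath : Q.IsPath := by
    have h3 := hP.1; rw [← hQR] at h3; exact h3.of_append_left
  have hQsub : ∀ e ∈ Q.edges, e ∈ G.edgeSet := by
    intro e he
    have h2 := Q.edges_subset_edgeSet he
    rw [SimpleGraph.edgeSet_deleteEdges] at h2
    exact h2.1
  set Q' := Q.transfer G hQsub with hQ'def
  have hQ'edges : Q'.edges = pre := (Q.edges_transfer hQsub).trans hQed
  have hQ'path : Q'.IsPath := hQpath.transfer hQsub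
  have hQ'short : IsShortestPath w G Q' := by
    refine key hw πG hπG huniqG Q' hQ'path ?_
    intro e he
    rw [hQ'edges] at he
    obtain ⟨a, -, b, -, hx⟩ := hpreTind e he
    rcases hx with ⟨h1, -⟩ | ⟨h1, -⟩
    exacts [⟨a, h1⟩, ⟨b, h1⟩]
  have heΔpre : pre.getLast hne ∈ pre := List.getLast_mem hne
  have heΔD : pre.getLast hne ∉ D := hpreD _ heΔpre
  have hQedne : Q.edges ≠ [] := by rw [hQed]; exact hne
  obtain ⟨x, heΔeq⟩ : ∃ x, pre.getLast hne = s(t, x) := by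
    cases hQrev : Q.reverse with
    | nil =>
      exfalso
      apply hQedne
      have h4 : Q = Walk.nil := by
        rw [← Q.reverse_reverse, hQrev, Walk.reverse_nil]
      rw [h4, Walk.edges_nil]
    | cons hadj R' =>
      rename_i x1
      refine ⟨x1, ?_⟩
      have h5 : pre.getLast? = some (pre.getLast hne) := List.getLast?_eq_getLast hne
      have h6 : Q.edges.getLast? = some s(t, x1) := by
        rw [List.getLast?_eq_head?_reverse, ← Walk.edges_reverse, hQrev, Walk.edges_cons,
          List.head?_cons]
      rw [hQed, h5] at h6
      exact Option.some_injective _ h6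
  set S := (πG u c).dropUntil p hp with hSdef
  have htS : t ∈ S.support := by
    rw [heΔeq] at hmem
    exact Walk.fst_mem_support_of_mem_edges _ hmem
  have hsplitS := S.take_spec htS
  have hW2 : (((πG u c).takeUntil p hp).append (S.takeUntil t htS)).append
      (S.dropUntil t htS) = πG u c := by
    rw [← Walk.append_assoc, hsplitS, hSdef, Walk.take_spec]
  have hA'short : IsShortestPath w G
      (((πG u c).takeUntil p hp).append (S.takeUntil t htS)) := by
    refine shortest_prefix hw (B := S.dropUntil t htS) ?_
    rw [hW2]; exact hπG u c
  have hA'Q : ((πG u c).takeUntil p hp).append (S.takeUntil t htS) = Q' :=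
    huniqG _ _ _ _ hA'short hQ'short
  obtain ⟨f, hfW, hfD⟩ := hc
  have hfSd : f ∈ (S.dropUntil t htS).edges := by
    rw [← hW2, Walk.edges_append, List.mem_append] at hfW
    rcases hfW with h8 | h8
    · exfalso
      rw [hA'Q, hQ'edges] at h8
      exact hpreD f h8 hfD
    · exact h8
  have hfS : f ∈ S.edges := S.edges_dropUntil_subset htS hfSd
  revert hfD hfSd hfS
  induction f using Sym2.ind with
  | _ z1 z2 =>
  intro hfD hfSd hfS
  have hz1S : z1 ∈ S.support :=
    S.support_dropUntil_subset htS (Walk.fst_mem_support_of_mem_edges _ hfSd)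
  have hz2S : z2 ∈ S.support :=
    S.support_dropUntil_subset htS (Walk.snd_mem_support_of_mem_edges _ hfSd)
  have hz1 : z1 = p ∨ z1 = c := by
    by_contra hcon
    push_neg at hcon
    exact hbetween z1 hz1S hcon.1 hcon.2 ⟨s(z1, z2), hfD, Sym2.mem_mk_left _ _⟩
  have hz2 : z2 = p ∨ z2 = c := by
    by_contra hcon
    push_neg at hcon
    exact hbetween z2 hz2S hcon.1 hcon.2 ⟨s(z1, z2), hfD, Sym2.mem_mk_right _ _⟩
  have hzne : z1 ≠ z2 := ((G.mem_edgeSet).mp (hDsub hfD)).ne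
  have hfpc : s(z1, z2) = s(p, c) := by
    rcases hz1 with rfl | rfl <;> rcases hz2 with rfl | rfl
    · exact absurd rfl hzne
    · rfl
    · exact Sym2.eq_swap
    · exact absurd rfl hzne
  rw [hfpc] at hfS hfD
  obtain ⟨hadj2, rest2, hrest2⟩ := path_first_edge ((hπG u c).1.dropUntil hp) hfS
  have hrestnil : rest2 = Walk.nil := by
    refine Walk.isPath_iff_eq_nil.mp ?_
    have h9 : S.IsPath := (hπG u c).1.dropUntil hp
    rw [hSdef, hrest2] at h9
    exact ((Walk.cons_isPath_iff _ _).mp h9).1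
  have hSedges : S.edges = [s(p, c)] := by
    rw [hSdef, hrest2, hrestnil, Walk.edges_cons, Walk.edges_nil]
  rw [hSedges, List.mem_singleton] at hmem
  rw [hmem] at heΔD
  exact heΔD hfD
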